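/- Let G = AB be a group with A periodic locally cyclic and B non-trivial torsion-free locally cyclic, and suppose every periodic normal subgroup of G is trivial. Then either A = 1 and G = B, or A = ⟨a⟩ with a² = 1 and G = B ⋊ ⟨a⟩ with b^a = b^{-1} for all b ∈ B. -/

import Mathlib

/-- A group is locally cyclic if every finitely generated subgroup is cyclic. -/
def IsLocallyCyclic (G : Type*) [Group G] : Prop :=
  ∀ H : Subgroup G, H.FG → IsCyclic H

private lemma zpow_eq_one_imp {G : Type*} [Group G] {x : G} (hx : ¬ IsOfFinOrder x)
    {m : ℤ} (hm : x ^ m = 1) : m = 0 := by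
  by_contra h
  apply hx
  refine isOfFinOrder_iff_pow_eq_one.mpr ⟨m.natAbs, Int.natAbs_pos.mpr h, ?_⟩
  rcases Int.natAbs_eq m with he | he
  · rw [← zpow_natCast, ← he, hm]
  · rw [← zpow_natCast, ← neg_neg (m.natAbs : ℤ), ← he, zpow_neg, hm, inv_one]

private lemma conj_finOrder {G : Type*} [Group G] {x : G} (g : G) (hx : IsOfFinOrder x) :
    IsOfFinOrder (g * x * g⁻¹) := by
  obtain ⟨n, hn, h1⟩ := isOfFinOrder_iff_pow_eq_one.mp hx
  refine isOfFinOrder_iff_pow_eq_one.mpr ⟨n, hn, ?_⟩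
  rw [conj_pow, h1, mul_one, mul_inv_cancel]

private lemma expand_list {G : Type*} [Group G] (x g : G) :
    ∀ n : ℕ, (x * g) ^ n = ((List.range n).map (fun i => g ^ i * x * (g ^ i)⁻¹)).prod * g ^ n
  | 0 => by simp
  | (n + 1) => by
    rw [pow_succ, expand_list x g n, List.range_succ, List.map_append, List.prod_append]
    simp only [List.map_cons, List.map_nil, List.prod_cons, List.prod_nil, mul_one]
    simp only [mul_assoc, mul_right_inj]
    rw [pow_succ, inv_mul_cancel_left]

private lemma pair_gen {G : Type*} [Group G] (B : Subgroup G) (hB : IsLocallyCyclic B)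
    {x y : G} (hx : x ∈ B) (hy : y ∈ B) :
    ∃ g ∈ B, ∃ p q : ℤ, g ^ p = x ∧ g ^ q = y := by
  set x' : ↥B := ⟨x, hx⟩
  set y' : ↥B := ⟨y, hy⟩
  have hfg : (Subgroup.closure ({x', y'} : Set ↥B)).FG :=
    (Subgroup.fg_iff _).mpr ⟨{x', y'}, rfl, Set.toFinite _⟩
  haveI := hB _ hfg
  obtain ⟨g, hgen⟩ := IsCyclic.exists_generator (α := ↥(Subgroup.closure ({x', y'} : Set ↥B)))
  have hx'' : x' ∈ Subgroup.closure ({x', y'} : Set ↥B) :=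
    Subgroup.subset_closure (by simp)
  have hy'' : y' ∈ Subgroup.closure ({x', y'} : Set ↥B) :=
    Subgroup.subset_closure (by simp)
  obtain ⟨p, hp⟩ := Subgroup.mem_zpowers_iff.mp (hgen ⟨x', hx''⟩)
  obtain ⟨q, hq⟩ := Subgroup.mem_zpowers_iff.mp (hgen ⟨y', hy''⟩)
  have hp2 : ((g : ↥B) : G) ^ p = x := by
    have h1 := congrArg (Subtype.val) hp
    rw [SubgroupClass.coe_zpow] at h1
    have h2 := congrArg (Subtype.val) h1
    rw [SubgroupClass.coe_zpow] at h2
    exact h2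
  have hq2 : ((g : ↥B) : G) ^ q = y := by
    have h1 := congrArg (Subtype.val) hq
    rw [SubgroupClass.coe_zpow] at h1
    have h2 := congrArg (Subtype.val) h1
    rw [SubgroupClass.coe_zpow] at h2
    exact h2
  exact ⟨((g : ↥B) : G), (g : ↥B).2, p, q, hp2, hq2⟩

private def conjHom {G : Type*} [Group G] (C : Subgroup G) (hC : C.Normal) (g : G) :
    ↥C →* ↥C where
  toFun x := ⟨g * x * g⁻¹, hC.conj_mem _ x.2 g⟩
  map_one' := by ext; simp
  map_mul' x y := by ext; simp [mul_assoc]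

private lemma conjHom_coe {G : Type*} [Group G] (C : Subgroup G) (hC : C.Normal) (g : G)
    (x : ↥C) : ((conjHom C hC g x : ↥C) : G) = g * x * g⁻¹ := rfl

private lemma conjHom_mul {G : Type*} [Group G] (C : Subgroup G) (hC : C.Normal) (g h : G)
    (x : ↥C) : conjHom C hC (g * h) x = conjHom C hC g (conjHom C hC h x) := by
  ext
  simp [conjHom_coe]
  group

private lemma conj_zpow' {G : Type*} [Group G] (g x : G) (m : ℤ) :
    (g⁻¹ * x * g) ^ m = g⁻¹ * x ^ m * g := by
  have h := conj_zpow (i := m) (a := g⁻¹) (b := x)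
  simpa using h

set_option maxHeartbeats 3000000

/-- Let `G = AB` with `A` periodic locally cyclic, `B` non-trivial torsion-free locally
cyclic, and suppose every periodic normal subgroup of `G` is trivial. Then either
`A = 1` and `G = B`, or `A = ⟨a⟩` with `a² = 1` and `G = B ⋊ ⟨a⟩` where `a` inverts `B`. -/
theorem product_with_trivial_periodic_radical {G : Type*} [Group G] (A B : Subgroup G)
    (hAper : ∀ x ∈ A, IsOfFinOrder x) (hAlc : IsLocallyCyclic A)
    (hBtf : ∀ x ∈ B, x ≠ 1 → ¬ IsOfFinOrder x) (hBlc : IsLocallyCyclic B)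
    (hBne : B ≠ ⊥)
    (hprod : ∀ g : G, ∃ a ∈ A, ∃ b ∈ B, g = a * b)
    (hrad : ∀ N : Subgroup G, N.Normal → (∀ x ∈ N, IsOfFinOrder x) → N = ⊥) :
    (A = ⊥ ∧ B = ⊤) ∨
      ∃ a : G, a ∈ A ∧ a ^ 2 = 1 ∧ A = Subgroup.zpowers a ∧ B.Normal ∧
        B ⊔ Subgroup.zpowers a = ⊤ ∧ B ⊓ Subgroup.zpowers a = ⊥ ∧
        ∀ b ∈ B, a⁻¹ * b * a = b⁻¹ := by
  classical
  have hab : ∀ x ∈ A, ∀ y ∈ A, x * y = y * x := by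
    intro x hx y hy
    obtain ⟨g, hg, p, q, hgp, hgq⟩ := pair_gen A hAlc hx hy
    rw [← hgp, ← hgq, ← zpow_add, ← zpow_add, add_comm]
  have hbb : ∀ x ∈ B, ∀ y ∈ B, x * y = y * x := by
    intro x hx y hy
    obtain ⟨g, hg, p, q, hgp, hgq⟩ := pair_gen B hBlc hx hy
    rw [← hgp, ← hgq, ← zpow_add, ← zpow_add, add_comm]
  have hcomm : ∀ x ∈ B, ∀ y ∈ B, x ≠ 1 → y ≠ 1 →
      ∃ p q : ℤ, p ≠ 0 ∧ q ≠ 0 ∧ x ^ p = y ^ q := by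
    intro x hx y hy hx1 hy1
    obtain ⟨g, hg, p, q, hgp, hgq⟩ := pair_gen B hBlc hx hy
    have hp0 : p ≠ 0 := by rintro rfl; rw [zpow_zero] at hgp; exact hx1 hgp.symm
    have hq0 : q ≠ 0 := by rintro rfl; rw [zpow_zero] at hgq; exact hy1 hgq.symm
    refine ⟨q, p, hq0, hp0, ?_⟩
    rw [← hgp, ← hgq, ← zpow_mul, ← zpow_mul, mul_comm]
  have hprod' : ∀ g : G, ∃ b ∈ B, ∃ a ∈ A, g = b * a := by
    intro g
    obtain ⟨a, ha, b, hb, h⟩ := hprod g⁻¹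
    exact ⟨b⁻¹, B.inv_mem hb, a⁻¹, A.inv_mem ha, by rw [← mul_inv_rev, ← h, inv_inv]⟩
  have comm_one : ∀ x y : G, x * y = y * x → x⁻¹ * y⁻¹ * x * y = 1 := by
    intro x y h
    have e : y⁻¹ * x * y = x := by rw [mul_assoc, h, inv_mul_cancel_left]
    calc x⁻¹ * y⁻¹ * x * y = x⁻¹ * (y⁻¹ * x * y) := by group
      _ = x⁻¹ * x := by rw [e]
      _ = 1 := inv_mul_cancel x
  -- rule A : conjugation of a mixed commutator by an element of A
  have ruleA : ∀ x ∈ A, ∀ y ∈ B, ∀ γ ∈ A, ∀ γ' ∈ A, ∀ y' ∈ B, y * γ = γ' * y' →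
      γ⁻¹ * (x⁻¹ * y⁻¹ * x * y) * γ = x⁻¹ * y'⁻¹ * x * y' := by
    intro x hx y hy γ hγ γ' hγ' y' hy' hdec
    have c1 : x⁻¹ * γ⁻¹ = γ⁻¹ * x⁻¹ := by
      have := hab x hx γ hγ
      rw [← mul_inv_rev, ← mul_inv_rev, this]
    have c2 : γ' * x * γ'⁻¹ = x := by
      rw [← hab x hx γ' hγ', mul_inv_cancel_right]
    have hy'e : y' = γ'⁻¹ * y * γ := by
      rw [mul_assoc, hdec, inv_mul_cancel_left]
    rw [hy'e]
    symm
    calc x⁻¹ * (γ'⁻¹ * y * γ)⁻¹ * x * (γ'⁻¹ * y * γ)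
        = x⁻¹ * γ⁻¹ * y⁻¹ * (γ' * x * γ'⁻¹) * y * γ := by group
      _ = x⁻¹ * γ⁻¹ * y⁻¹ * x * y * γ := by rw [c2]
      _ = γ⁻¹ * x⁻¹ * y⁻¹ * x * y * γ := by rw [c1]
      _ = γ⁻¹ * (x⁻¹ * y⁻¹ * x * y) * γ := by group
  -- rule B : conjugation of a mixed commutator by an element of B
  have ruleB : ∀ x ∈ A, ∀ y ∈ B, ∀ δ ∈ B, ∀ δ' ∈ B, ∀ x' ∈ A, x * δ = δ' * x' →
      δ⁻¹ * (x⁻¹ * y⁻¹ * x * y) * δ = x'⁻¹ * y⁻¹ * x' * y := by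
    intro x hx y hy δ hδ δ' hδ' x' hx' hdec
    have c1 : y * δ = δ * y := hbb y hy δ hδ
    have c2 : δ' * y⁻¹ * δ'⁻¹ = y⁻¹ := by
      have := hbb y hy δ' hδ'
      have e : y⁻¹ * δ'⁻¹ = δ'⁻¹ * y⁻¹ := by rw [← mul_inv_rev, ← mul_inv_rev, this]
      rw [mul_assoc, e, mul_inv_cancel_left]
    have hx'e : x' = δ'⁻¹ * x * δ := by
      rw [mul_assoc, hdec, inv_mul_cancel_left]
    rw [hx'e]
    symm
    calc (δ'⁻¹ * x * δ)⁻¹ * y⁻¹ * (δ'⁻¹ * x * δ) * y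
        = δ⁻¹ * x⁻¹ * (δ' * y⁻¹ * δ'⁻¹) * x * δ * y := by group
      _ = δ⁻¹ * x⁻¹ * y⁻¹ * x * δ * y := by rw [c2]
      _ = δ⁻¹ * x⁻¹ * y⁻¹ * x * (δ * y) := by group
      _ = δ⁻¹ * x⁻¹ * y⁻¹ * x * (y * δ) := by rw [c1]
      _ = δ⁻¹ * (x⁻¹ * y⁻¹ * x * y) * δ := by group
  -- Itô's commutation: two mixed commutators commute
  have ito : ∀ a ∈ A, ∀ b ∈ B, ∀ c ∈ A, ∀ d ∈ B,
      Commute (a⁻¹ * b⁻¹ * a * b) (c⁻¹ * d⁻¹ * c * d) := by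
    intro a ha b hb c hc d hd
    obtain ⟨γ₁, hγ₁, b₁, hb₁, hd1⟩ := hprod (b * c⁻¹)
    obtain ⟨δ₁, hδ₁, a₁, ha₁, hd2⟩ := hprod' (a * d⁻¹)
    have hd3 : b₁ * c = γ₁⁻¹ * b := by
      have : b₁ = γ₁⁻¹ * b * c⁻¹ := by rw [mul_assoc, hd1, inv_mul_cancel_left]
      rw [this, mul_assoc, mul_assoc, inv_mul_cancel, mul_one]
    have hd4 : a₁ * d = δ₁⁻¹ * a := by
      have : a₁ = δ₁⁻¹ * a * d⁻¹ := by rw [mul_assoc, hd2, inv_mul_cancel_left]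
      rw [this, mul_assoc, mul_assoc, inv_mul_cancel, mul_one]
    have s1 : c * (a⁻¹ * b⁻¹ * a * b) * c⁻¹ = a⁻¹ * b₁⁻¹ * a * b₁ := by
      have := ruleA a ha b hb c⁻¹ (A.inv_mem hc) γ₁ hγ₁ b₁ hb₁ hd1
      simpa using this
    have s2 : d * (a⁻¹ * b₁⁻¹ * a * b₁) * d⁻¹ = a₁⁻¹ * b₁⁻¹ * a₁ * b₁ := by
      have := ruleB a ha b₁ hb₁ d⁻¹ (B.inv_mem hd) δ₁ hδ₁ a₁ ha₁ hd2
      simpa using this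
    have s3 : c⁻¹ * (a₁⁻¹ * b₁⁻¹ * a₁ * b₁) * c = a₁⁻¹ * b⁻¹ * a₁ * b :=
      ruleA a₁ ha₁ b₁ hb₁ c hc γ₁⁻¹ (A.inv_mem hγ₁) b hb hd3
    have s4 : d⁻¹ * (a₁⁻¹ * b⁻¹ * a₁ * b) * d = a⁻¹ * b⁻¹ * a * b :=
      ruleB a₁ ha₁ b hb d hd δ₁⁻¹ (B.inv_mem hδ₁) a ha hd4
    have key : (c⁻¹ * d⁻¹ * c * d)⁻¹ * (a⁻¹ * b⁻¹ * a * b) * (c⁻¹ * d⁻¹ * c * d)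
        = a⁻¹ * b⁻¹ * a * b := by
      have e : (c⁻¹ * d⁻¹ * c * d)⁻¹ * (a⁻¹ * b⁻¹ * a * b) * (c⁻¹ * d⁻¹ * c * d)
          = d⁻¹ * (c⁻¹ * (d * (c * (a⁻¹ * b⁻¹ * a * b) * c⁻¹) * d⁻¹) * c) * d := by group
      rw [e, s1, s2, s3, s4]
    have := congrArg (fun z => (c⁻¹ * d⁻¹ * c * d) * z) key
    calc (a⁻¹ * b⁻¹ * a * b) * (c⁻¹ * d⁻¹ * c * d)
        = (c⁻¹ * d⁻¹ * c * d) * ((c⁻¹ * d⁻¹ * c * d)⁻¹ * (a⁻¹ * b⁻¹ * a * b)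
            * (c⁻¹ * d⁻¹ * c * d)) := by group
      _ = (c⁻¹ * d⁻¹ * c * d) * (a⁻¹ * b⁻¹ * a * b) := by rw [key]
  set Pset : Set G := {x | ∃ a ∈ A, ∃ b ∈ B, x = a⁻¹ * b⁻¹ * a * b} with hPset
  set K : Subgroup G := Subgroup.closure Pset with hKdef
  have hPK : ∀ a ∈ A, ∀ b ∈ B, a⁻¹ * b⁻¹ * a * b ∈ K := by
    intro a ha b hb
    exact Subgroup.subset_closure ⟨a, ha, b, hb, rfl⟩
  have hPconj : ∀ g : G, ∀ p ∈ Pset, g⁻¹ * p * g ∈ Pset := by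
    rintro g p ⟨a, ha, b, hb, rfl⟩
    obtain ⟨α, hα, β, hβ, hg⟩ := hprod g
    obtain ⟨γ', hγ', y', hy', hd1⟩ := hprod (b * α)
    obtain ⟨δ', hδ', x', hx', hd2⟩ := hprod' (a * β)
    have s1 := ruleA a ha b hb α hα γ' hγ' y' hy' hd1
    have s2 := ruleB a ha y' hy' β hβ δ' hδ' x' hx' hd2
    have e : g⁻¹ * (a⁻¹ * b⁻¹ * a * b) * g
        = β⁻¹ * (α⁻¹ * (a⁻¹ * b⁻¹ * a * b) * α) * β := by rw [hg]; group
    rw [e, s1, s2]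
    exact ⟨x', hx', y', hy', rfl⟩
  have hKnormal : K.Normal := by
    constructor
    intro n hn g
    refine Subgroup.closure_induction (p := fun x _ => g * x * g⁻¹ ∈ K) ?_ ?_ ?_ ?_ hn
    · intro x hxP
      refine Subgroup.subset_closure ?_
      have := hPconj g⁻¹ x hxP
      simpa using this
    · simpa using one_mem K
    · intro x y _ _ hgx hgy
      have e : g * (x * y) * g⁻¹ = (g * x * g⁻¹) * (g * y * g⁻¹) := by group
      rw [e]; exact mul_mem hgx hgy
    · intro x _ hgx
      have e : g * x⁻¹ * g⁻¹ = (g * x * g⁻¹)⁻¹ := by group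
      rw [e]; exact inv_mem hgx
  have hKcomm : ∀ x ∈ K, ∀ y ∈ K, Commute x y := by
    have h1 : ∀ p ∈ Pset, ∀ y ∈ K, Commute p y := by
      intro p hp y hy
      refine Subgroup.closure_induction (p := fun z _ => Commute p z) ?_ ?_ ?_ ?_ hy
      · rintro z ⟨c, hc, d, hd, rfl⟩
        obtain ⟨a, ha, b, hb, rfl⟩ := hp
        exact ito a ha b hb c hc d hd
      · exact Commute.one_right p
      · intro u v _ _ h1 h2; exact h1.mul_right h2
      · intro u _ h1; exact h1.inv_right
    intro x hx y hy
    refine Subgroup.closure_induction (p := fun z _ => Commute z y) ?_ ?_ ?_ ?_ hx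
    · intro z hz; exact h1 z hz y hy
    · exact Commute.one_left y
    · intro u v _ _ hu hv; exact hu.mul_left hv
    · intro u _ hu; exact hu.inv_left
  have hsplitR : ∀ g h₁ h₂ : G, g⁻¹ * h₁⁻¹ * g * h₁ ∈ K → g⁻¹ * h₂⁻¹ * g * h₂ ∈ K →
      g⁻¹ * (h₁ * h₂)⁻¹ * g * (h₁ * h₂) ∈ K := by
    intro g h₁ h₂ m1 m2
    have e : g⁻¹ * (h₁ * h₂)⁻¹ * g * (h₁ * h₂)
        = (g⁻¹ * h₂⁻¹ * g * h₂) * (h₂⁻¹ * (g⁻¹ * h₁⁻¹ * g * h₁) * h₂) := by group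
    rw [e]
    refine mul_mem m2 ?_
    have := hKnormal.conj_mem _ m1 h₂⁻¹
    simpa using this
  have hsplitL : ∀ g₁ g₂ h : G, g₁⁻¹ * h⁻¹ * g₁ * h ∈ K → g₂⁻¹ * h⁻¹ * g₂ * h ∈ K →
      (g₁ * g₂)⁻¹ * h⁻¹ * (g₁ * g₂) * h ∈ K := by
    intro g₁ g₂ h m1 m2
    have e : (g₁ * g₂)⁻¹ * h⁻¹ * (g₁ * g₂) * h
        = (g₂⁻¹ * (g₁⁻¹ * h⁻¹ * g₁ * h) * g₂) * (g₂⁻¹ * h⁻¹ * g₂ * h) := by group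
    rw [e]
    refine mul_mem ?_ m2
    have := hKnormal.conj_mem _ m1 g₂⁻¹
    simpa using this
  have commK : ∀ g h : G, g⁻¹ * h⁻¹ * g * h ∈ K := by
    intro g h
    obtain ⟨a1, ha1, b1, hb1, hg⟩ := hprod g
    obtain ⟨a2, ha2, b2, hb2, hh⟩ := hprod h
    rw [hg, hh]
    have base1 : a1⁻¹ * b2⁻¹ * a1 * b2 ∈ K := hPK a1 ha1 b2 hb2
    have base2 : b1⁻¹ * a2⁻¹ * b1 * a2 ∈ K := by
      have e : b1⁻¹ * a2⁻¹ * b1 * a2 = (a2⁻¹ * b1⁻¹ * a2 * b1)⁻¹ := by group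
      rw [e]; exact inv_mem (hPK a2 ha2 b1 hb1)
    have base3 : a1⁻¹ * a2⁻¹ * a1 * a2 ∈ K := by
      rw [comm_one a1 a2 (hab a1 ha1 a2 ha2)]; exact one_mem K
    have base4 : b1⁻¹ * b2⁻¹ * b1 * b2 ∈ K := by
      rw [comm_one b1 b2 (hbb b1 hb1 b2 hb2)]; exact one_mem K
    exact hsplitL a1 b1 (a2 * b2) (hsplitR a1 a2 b2 base3 base1)
      (hsplitR b1 a2 b2 base2 base4)
  have hKtf : ∀ x ∈ K, IsOfFinOrder x → x = 1 := by
    set N : Subgroup G :=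
      { carrier := {x | x ∈ K ∧ IsOfFinOrder x},
        one_mem' := ⟨one_mem K, IsOfFinOrder.one⟩,
        mul_mem' := fun hx hy =>
          ⟨mul_mem hx.1 hy.1, (hKcomm _ hx.1 _ hy.1).isOfFinOrder_mul hx.2 hy.2⟩,
        inv_mem' := fun hx => ⟨inv_mem hx.1, hx.2.inv⟩ } with hNdef
    have hNn : N.Normal := ⟨fun n hn g => ⟨hKnormal.conj_mem n hn.1 g, conj_finOrder g hn.2⟩⟩
    have hN := hrad N hNn (fun x hx => hx.2)
    intro x hxK hxf
    have hxN : x ∈ N := ⟨hxK, hxf⟩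
    rw [hN] at hxN
    simpa using hxN
  by_cases hK : K = ⊥
  · -- G is abelian, A is a periodic normal subgroup, hence trivial
    left
    have hGab : ∀ g h : G, g * h = h * g := by
      intro g h
      have h0 := commK g h
      rw [hK] at h0
      have h1 : g⁻¹ * h⁻¹ * g * h = 1 := by simpa using h0
      calc g * h = h * g * (g⁻¹ * h⁻¹ * g * h) := by group
        _ = h * g := by rw [h1, mul_one]
    have hAn : A.Normal := by
      constructor
      intro n hn g
      have e : g * n * g⁻¹ = n := by rw [hGab g n, mul_inv_cancel_right]
      rw [e]; exact hn
    have hA : A = ⊥ := hrad A hAn hAper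
    constructor
    · exact hA
    · rw [eq_top_iff]
      intro x _
      obtain ⟨a, ha, b, hb, hx⟩ := hprod x
      rw [hA] at ha
      have : a = 1 := by simpa using ha
      rw [hx, this, one_mul]
      exact hb
  · -- K is non-trivial.
    -- Step 1: B ∩ K is non-trivial.
    have hexpK : ∀ k ∈ K, ∀ (b : G) (n : ℕ), ∃ k' ∈ K, (k * b) ^ n = k' * b ^ n := by
      intro k hk b n
      induction n with
      | zero => exact ⟨1, one_mem K, by simp⟩
      | succ n ih =>
        obtain ⟨k', hk', he⟩ := ih
        refine ⟨k' * (b ^ n * k * (b ^ n)⁻¹), mul_mem hk' (hKnormal.conj_mem k hk (b ^ n)), ?_⟩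
        rw [pow_succ, he]
        group
    have hE : ∃ e ∈ B, e ∈ K ∧ e ≠ 1 := by
      by_contra hcon
      push_neg at hcon
      have hDtf : ∀ k ∈ K, ∀ b ∈ B, IsOfFinOrder (k * b) → k * b = 1 := by
        intro k hk b hb hfin
        obtain ⟨n, hn, h1⟩ := isOfFinOrder_iff_pow_eq_one.mp hfin
        obtain ⟨k', hk', he⟩ := hexpK k hk b n
        rw [he] at h1
        have hbn : b ^ n ∈ K := by
          have : b ^ n = k'⁻¹ := by
            calc b ^ n = k'⁻¹ * (k' * b ^ n) := by group
              _ = k'⁻¹ := by rw [h1, mul_one]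
          rw [this]; exact inv_mem hk'
        have hbn1 : b ^ n = 1 := hcon (b ^ n) (pow_mem hb n) hbn
        have hb1 : b = 1 := by
          by_contra hbne
          exact hBtf b hb hbne (isOfFinOrder_iff_pow_eq_one.mpr ⟨n, hn, hbn1⟩)
        rw [hb1, mul_one] at hfin ⊢
        exact hKtf k hk hfin
      have hKB : ∀ k ∈ K, k = 1 := by
        intro k hk
        obtain ⟨a, ha, b, hb, hkab⟩ := hprod k
        have ha' : a = k * b⁻¹ := by rw [hkab]; group
        have hfa : IsOfFinOrder (k * b⁻¹) := ha' ▸ hAper a ha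
        have h1 : k * b⁻¹ = 1 := hDtf k hk b⁻¹ (B.inv_mem hb) hfa
        have hkb : k = b := by
          have := mul_inv_eq_one.mp h1
          exact this
        exact hcon k (by rw [hkb]; exact hb) hk
      exact hK ((Subgroup.eq_bot_iff_forall K).mpr hKB)
    obtain ⟨e, heB, heK, hene⟩ := hE
    -- Step 2: the centralizer C of K.
    set C : Subgroup G := Subgroup.centralizer (K : Set G) with hCdef
    have hCnormal : C.Normal := by
      constructor
      intro n hn g
      rw [Subgroup.mem_centralizer_iff]
      intro k hkK
      have h1 : g⁻¹ * k * g ∈ K := by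
        have := hKnormal.conj_mem k hkK g⁻¹
        simpa using this
      have h2 := Subgroup.mem_centralizer_iff.mp hn _ h1
      calc k * (g * n * g⁻¹) = g * ((g⁻¹ * k * g) * n) * g⁻¹ := by group
        _ = g * (n * (g⁻¹ * k * g)) * g⁻¹ := by rw [h2]
        _ = (g * n * g⁻¹) * k := by group
    have hKC : ∀ k ∈ K, k ∈ C := by
      intro k hk
      rw [Subgroup.mem_centralizer_iff]
      intro k' hk'
      exact (hKcomm k' hk' k hk)
    have hC1 : ∀ (x y : G) (n : ℕ), ∃ k ∈ K, (x * y) ^ n = x ^ n * y ^ n * k := by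
      intro x y n
      induction n with
      | zero => exact ⟨1, one_mem K, by simp⟩
      | succ n ih =>
        obtain ⟨k, hkK, hk⟩ := ih
        refine ⟨y⁻¹ * ((((y ^ n)⁻¹ * x⁻¹ * y ^ n * x) * (x⁻¹ * k * x))) * y, ?_, ?_⟩
        · have m2 : (y ^ n)⁻¹ * x⁻¹ * y ^ n * x ∈ K := commK (y ^ n) x
          have m1 : x⁻¹ * k * x ∈ K := by
            have := hKnormal.conj_mem _ hkK x⁻¹
            simpa using this
          have := hKnormal.conj_mem _ (mul_mem m2 m1) y⁻¹
          simpa using this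
        · rw [pow_succ, hk]
          group
    have hpowK : ∀ g : G, ∃ m : ℕ, 0 < m ∧ g ^ m ∈ K := by
      intro g
      obtain ⟨a, ha, b, hb, hg⟩ := hprod g
      have hnpos : 0 < orderOf a := (hAper a ha).orderOf_pos
      have han : a ^ orderOf a = 1 := pow_orderOf_eq_one a
      by_cases hb1 : b = 1
      · refine ⟨orderOf a, hnpos, ?_⟩
        rw [hg, hb1, mul_one, han]; exact one_mem K
      · obtain ⟨p, q, hp0, hq0, hpq⟩ := hcomm b hb e heB hb1 hene
        have hbs : ∃ q' : ℤ, b ^ (p.natAbs : ℤ) = e ^ q' := by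
          rcases Int.natAbs_eq p with hh | hh
          · exact ⟨q, by rw [← hh, hpq]⟩
          · refine ⟨-q, ?_⟩
            have : ((p.natAbs : ℤ)) = -p := by omega
            rw [this, zpow_neg, hpq, ← zpow_neg]
        obtain ⟨q', hq'⟩ := hbs
        have hppos : 0 < p.natAbs := Int.natAbs_pos.mpr hp0
        refine ⟨orderOf a * p.natAbs, Nat.mul_pos hnpos hppos, ?_⟩
        obtain ⟨k', hk', hek⟩ := hC1 a b (orderOf a * p.natAbs)
        rw [hg, hek]
        have e1 : a ^ (orderOf a * p.natAbs) = 1 := by rw [pow_mul, han, one_pow]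
        have e2 : b ^ (orderOf a * p.natAbs) ∈ K := by
          have c1 : b ^ p.natAbs = e ^ q' := by rw [← zpow_natCast b, hq']
          have c2 : b ^ (orderOf a * p.natAbs) = (e ^ q') ^ orderOf a := by
            rw [mul_comm, pow_mul, c1]
          rw [c2, ← zpow_natCast (e ^ q'), ← zpow_mul]
          exact K.zpow_mem heK _
        rw [e1, one_mul]
        exact mul_mem e2 hk'
    have hCab : ∀ x ∈ C, ∀ y ∈ C, x * y = y * x := by
      intro x hx y hy
      have hkK : x⁻¹ * y⁻¹ * x * y ∈ K := commK x y
      obtain ⟨m, hm, hxm⟩ := hpowK x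
      have hcj : ∀ j : ℕ, (x ^ j)⁻¹ * y⁻¹ * (x ^ j) * y = (x⁻¹ * y⁻¹ * x * y) ^ j := by
        intro j
        induction j with
        | zero => simp
        | succ j ih =>
          have eid : (x ^ (j + 1))⁻¹ * y⁻¹ * (x ^ (j + 1)) * y
              = (x⁻¹ * ((x ^ j)⁻¹ * y⁻¹ * (x ^ j) * y) * x) * (x⁻¹ * y⁻¹ * x * y) := by
            group
          rw [eid, ih]
          have hcent := Subgroup.mem_centralizer_iff.mp hx
              ((x⁻¹ * y⁻¹ * x * y) ^ j) (pow_mem hkK j)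
          have e2 : x⁻¹ * (x⁻¹ * y⁻¹ * x * y) ^ j * x = (x⁻¹ * y⁻¹ * x * y) ^ j := by
            rw [mul_assoc, hcent, inv_mul_cancel_left]
          rw [e2, ← pow_succ]
      have h1 : (x ^ m)⁻¹ * y⁻¹ * (x ^ m) * y = 1 :=
        comm_one (x ^ m) y (Subgroup.mem_centralizer_iff.mp hy (x ^ m) hxm)
      have hk1 : (x⁻¹ * y⁻¹ * x * y) ^ m = 1 := (hcj m).symm.trans h1
      have hone : x⁻¹ * y⁻¹ * x * y = 1 :=
        hKtf _ hkK (isOfFinOrder_iff_pow_eq_one.mpr ⟨m, hm, hk1⟩)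
      calc x * y = y * x * (x⁻¹ * y⁻¹ * x * y) := by group
        _ = y * x := by rw [hone, mul_one]
    have hCtf : ∀ x ∈ C, IsOfFinOrder x → x = 1 := by
      set Nc : Subgroup G :=
        { carrier := {x | x ∈ C ∧ IsOfFinOrder x},
          one_mem' := ⟨one_mem C, IsOfFinOrder.one⟩,
          mul_mem' := fun hx hy =>
            ⟨mul_mem hx.1 hy.1,
              (show Commute _ _ from hCab _ hx.1 _ hy.1).isOfFinOrder_mul hx.2 hy.2⟩,
          inv_mem' := fun hx => ⟨inv_mem hx.1, hx.2.inv⟩ } with hNcdef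
      have hNn : Nc.Normal := ⟨fun n hn g => ⟨hCnormal.conj_mem n hn.1 g, conj_finOrder g hn.2⟩⟩
      have hN := hrad Nc hNn (fun x hx => hx.2)
      intro x hxC hxf
      have hxN : x ∈ Nc := ⟨hxC, hxf⟩
      rw [hN] at hxN
      simpa using hxN
    letI : CommGroup ↥C :=
      { (inferInstance : Group ↥C) with
        mul_comm := fun x y => Subtype.ext (hCab x x.2 y y.2) }
    have hcoe : ∀ (f : ℕ → ↥C) (n : ℕ),
        ((∏ i ∈ Finset.range n, f i : ↥C) : G)
          = ((List.range n).map (fun i => (f i : G))).prod := by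
      intro f n
      induction n with
      | zero => simp
      | succ n ih =>
        rw [Finset.prod_range_succ, List.range_succ, List.map_append, List.prod_append]
        simp only [List.map_cons, List.map_nil, List.prod_cons, List.prod_nil, mul_one]
        rw [Subgroup.coe_mul, ih]
    have hdata : ∀ v : G, v ∈ C → v ≠ 1 →
        ∃ a b : G, a ∈ A ∧ b ∈ B ∧ b ≠ 1 ∧ v = a * b ∧
          (∀ x ∈ C, ∀ i : ℕ, a ^ i * x * (a ^ i)⁻¹ = (b ^ i)⁻¹ * x * b ^ i) ∧
          ((List.range (orderOf a)).map (fun i => a ^ i * v * (a ^ i)⁻¹)).prod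
            = b ^ (orderOf a) ∧ 0 < orderOf a := by
      intro v hvC hv1
      obtain ⟨a, ha, b, hb, hvab⟩ := hprod v
      have hb1 : b ≠ 1 := by
        rintro rfl
        rw [mul_one] at hvab
        exact hv1 (hCtf v hvC (hvab ▸ hAper a ha))
      have hnpos : 0 < orderOf a := (hAper a ha).orderOf_pos
      have han : a ^ orderOf a = 1 := pow_orderOf_eq_one a
      have hvcent : ∀ z ∈ C, v * z * v⁻¹ = z := by
        intro z hz
        rw [hCab v hvC z hz, mul_inv_cancel_right]
      have hrel1 : ∀ x ∈ C, a * x * a⁻¹ = b⁻¹ * x * b := by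
        intro x hxC
        have hx' : b⁻¹ * x * b ∈ C := by
          have := hCnormal.conj_mem x hxC b⁻¹
          simpa using this
        have h2 := hvcent _ hx'
        rw [hvab] at h2
        calc a * x * a⁻¹ = (a * b) * (b⁻¹ * x * b) * (a * b)⁻¹ := by group
          _ = b⁻¹ * x * b := h2
      have hreli : ∀ x ∈ C, ∀ i : ℕ, a ^ i * x * (a ^ i)⁻¹ = (b ^ i)⁻¹ * x * b ^ i := by
        intro x hxC i
        induction i with
        | zero => simp
        | succ i ih =>
          have hxi : (b ^ i)⁻¹ * x * b ^ i ∈ C := by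
            have := hCnormal.conj_mem x hxC (b ^ i)⁻¹
            simpa using this
          calc a ^ (i + 1) * x * (a ^ (i + 1))⁻¹
              = a * (a ^ i * x * (a ^ i)⁻¹) * a⁻¹ := by
                rw [pow_succ']; simp [mul_assoc, mul_inv_rev]
            _ = a * ((b ^ i)⁻¹ * x * b ^ i) * a⁻¹ := by rw [ih]
            _ = b⁻¹ * ((b ^ i)⁻¹ * x * b ^ i) * b := hrel1 _ hxi
            _ = (b ^ (i + 1))⁻¹ * x * b ^ (i + 1) := by
                rw [pow_succ]; simp [mul_assoc, mul_inv_rev]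
      have hva : v * b⁻¹ = a := by rw [hvab]; group
      have hexp := expand_list v b⁻¹ (orderOf a)
      rw [hva, han] at hexp
      have hprod1 : ((List.range (orderOf a)).map
          (fun i => (b⁻¹) ^ i * v * ((b⁻¹) ^ i)⁻¹)).prod = b ^ orderOf a := by
        have h3 : ((List.range (orderOf a)).map
            (fun i => (b⁻¹) ^ i * v * ((b⁻¹) ^ i)⁻¹)).prod = ((b⁻¹) ^ orderOf a)⁻¹ := by
          calc ((List.range (orderOf a)).map (fun i => (b⁻¹) ^ i * v * ((b⁻¹) ^ i)⁻¹)).prod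
              = ((List.range (orderOf a)).map (fun i => (b⁻¹) ^ i * v * ((b⁻¹) ^ i)⁻¹)).prod
                * (b⁻¹) ^ orderOf a * ((b⁻¹) ^ orderOf a)⁻¹ := by group
            _ = 1 * ((b⁻¹) ^ orderOf a)⁻¹ := by rw [← hexp]
            _ = ((b⁻¹) ^ orderOf a)⁻¹ := one_mul _
        rw [h3, inv_pow, inv_inv]
      have hnorm : ((List.range (orderOf a)).map (fun i => a ^ i * v * (a ^ i)⁻¹)).prod
          = b ^ orderOf a := by
        rw [← hprod1]
        congr 1
        apply List.map_congr_left
        intro i _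
        have h1 : (b⁻¹) ^ i * v * ((b⁻¹) ^ i)⁻¹ = (b ^ i)⁻¹ * v * b ^ i := by
          rw [inv_pow]; group
        rw [h1, ← hreli v hvC i]
      exact ⟨a, b, ha, hb, hb1, hvab, hreli, hnorm, hnpos⟩
    have hcore : ∀ v : G, v ∈ C → ∃ n : ℕ, 0 < n ∧ v ^ n ∈ B := by
      intro v hvC
      by_cases hv1 : v = 1
      · exact ⟨1, one_pos, by rw [hv1, one_pow]; exact one_mem B⟩
      obtain ⟨a, b, ha, hb, hb1, hvab, hreli, hnorm, hnpos⟩ := hdata v hvC hv1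
      have hzC : b ^ orderOf a ∈ C := by
        rw [← hnorm]
        refine Subgroup.list_prod_mem C ?_
        intro x hx
        simp only [List.mem_map, List.mem_range] at hx
        obtain ⟨i, _, rfl⟩ := hx
        exact hCnormal.conj_mem v hvC (a ^ i)
      have hk1 : (∏ i ∈ Finset.range (orderOf a),
          conjHom C hCnormal (a ^ i) ⟨v, hvC⟩) = ⟨b ^ orderOf a, hzC⟩ := by
        apply Subtype.ext
        rw [hcoe]
        simpa [conjHom_coe] using hnorm
      have hz_fix : ∀ i : ℕ,
          conjHom C hCnormal (a ^ i) ⟨b ^ orderOf a, hzC⟩ = ⟨b ^ orderOf a, hzC⟩ := by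
        intro i
        apply Subtype.ext
        rw [conjHom_coe]
        show a ^ i * (b ^ orderOf a) * (a ^ i)⁻¹ = b ^ orderOf a
        rw [hreli (b ^ orderOf a) hzC i]
        have hcm : b ^ orderOf a * b ^ i = b ^ i * b ^ orderOf a := by
          rw [← pow_add, ← pow_add, add_comm]
        calc (b ^ i)⁻¹ * b ^ orderOf a * b ^ i
            = (b ^ i)⁻¹ * (b ^ orderOf a * b ^ i) := by group
          _ = (b ^ i)⁻¹ * (b ^ i * b ^ orderOf a) := by rw [hcm]
          _ = b ^ orderOf a := by rw [inv_mul_cancel_left]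
      have hk2 : (∏ i ∈ Finset.range (orderOf a),
          conjHom C hCnormal (a ^ i) ⟨b ^ orderOf a, hzC⟩)
          = (⟨b ^ orderOf a, hzC⟩ : ↥C) ^ orderOf a := by
        rw [Finset.prod_congr rfl (fun i _ => hz_fix i), Finset.prod_const, Finset.card_range]
      have hk3 : (∏ i ∈ Finset.range (orderOf a),
          conjHom C hCnormal (a ^ i) ((⟨v, hvC⟩ : ↥C) ^ orderOf a
            * (⟨b ^ orderOf a, hzC⟩ : ↥C)⁻¹)) = 1 := by
        have e1 : ∀ i : ℕ, conjHom C hCnormal (a ^ i) ((⟨v, hvC⟩ : ↥C) ^ orderOf a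
            * (⟨b ^ orderOf a, hzC⟩ : ↥C)⁻¹)
            = conjHom C hCnormal (a ^ i) ⟨v, hvC⟩ ^ orderOf a
              * (conjHom C hCnormal (a ^ i) ⟨b ^ orderOf a, hzC⟩)⁻¹ := by
          intro i
          rw [map_mul, map_pow, map_inv]
        rw [Finset.prod_congr rfl (fun i _ => e1 i), Finset.prod_mul_distrib,
          Finset.prod_inv_distrib, Finset.prod_pow, hk1, hk2, mul_inv_cancel]
      by_cases hw1 : (⟨v, hvC⟩ : ↥C) ^ orderOf a * (⟨b ^ orderOf a, hzC⟩ : ↥C)⁻¹ = 1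
      · refine ⟨orderOf a, hnpos, ?_⟩
        have h4 : (⟨v, hvC⟩ : ↥C) ^ orderOf a = ⟨b ^ orderOf a, hzC⟩ := mul_inv_eq_one.mp hw1
        have h5 : v ^ orderOf a = b ^ orderOf a := by
          have := congrArg (Subtype.val) h4
          simpa using this
        rw [h5]
        exact pow_mem hb (orderOf a)
      · exfalso
        set w : ↥C := (⟨v, hvC⟩ : ↥C) ^ orderOf a * (⟨b ^ orderOf a, hzC⟩ : ↥C)⁻¹ with hwdef
        have hwC : (w : G) ∈ C := w.2
        have hwne : (w : G) ≠ 1 := fun hh => hw1 (Subtype.ext hh)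
        obtain ⟨a2, b2, ha2, hb2, hb21, hwab, hreli2, hnorm2, hnpos2⟩ := hdata w hwC hwne
        have hz2C : b2 ^ orderOf a2 ∈ C := by
          rw [← hnorm2]
          refine Subgroup.list_prod_mem C ?_
          intro x hx
          simp only [List.mem_map, List.mem_range] at hx
          obtain ⟨j, _, rfl⟩ := hx
          exact hCnormal.conj_mem w hwC (a2 ^ j)
        have hk1w : (∏ j ∈ Finset.range (orderOf a2),
            conjHom C hCnormal (a2 ^ j) w) = ⟨b2 ^ orderOf a2, hz2C⟩ := by
          apply Subtype.ext
          rw [hcoe]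
          simpa [conjHom_coe] using hnorm2
        have hz2fix : ∀ i : ℕ,
            conjHom C hCnormal (a ^ i) ⟨b2 ^ orderOf a2, hz2C⟩
              = ⟨b2 ^ orderOf a2, hz2C⟩ := by
          intro i
          apply Subtype.ext
          rw [conjHom_coe]
          show a ^ i * (b2 ^ orderOf a2) * (a ^ i)⁻¹ = b2 ^ orderOf a2
          rw [hreli (b2 ^ orderOf a2) hz2C i]
          have hcm : b2 ^ orderOf a2 * b ^ i = b ^ i * b2 ^ orderOf a2 :=
            ((show Commute b2 b from hbb b2 hb2 b hb).pow_pow (orderOf a2) i).eq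
          calc (b ^ i)⁻¹ * b2 ^ orderOf a2 * b ^ i
              = (b ^ i)⁻¹ * (b2 ^ orderOf a2 * b ^ i) := by group
            _ = (b ^ i)⁻¹ * (b ^ i * b2 ^ orderOf a2) := by rw [hcm]
            _ = b2 ^ orderOf a2 := by rw [inv_mul_cancel_left]
        have hT1 : (∏ i ∈ Finset.range (orderOf a), ∏ j ∈ Finset.range (orderOf a2),
            conjHom C hCnormal (a ^ i * a2 ^ j) w)
            = (⟨b2 ^ orderOf a2, hz2C⟩ : ↥C) ^ orderOf a := by
          have hinner : ∀ i ∈ Finset.range (orderOf a), (∏ j ∈ Finset.range (orderOf a2),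
              conjHom C hCnormal (a ^ i * a2 ^ j) w) = ⟨b2 ^ orderOf a2, hz2C⟩ := by
            intro i _
            have e1 : ∀ j : ℕ, conjHom C hCnormal (a ^ i * a2 ^ j) w
                = conjHom C hCnormal (a ^ i) (conjHom C hCnormal (a2 ^ j) w) :=
              fun j => conjHom_mul C hCnormal _ _ w
            rw [Finset.prod_congr rfl (fun j _ => e1 j), ← map_prod, hk1w, hz2fix i]
          rw [Finset.prod_congr rfl hinner, Finset.prod_const, Finset.card_range]
        have hT2 : (∏ i ∈ Finset.range (orderOf a), ∏ j ∈ Finset.range (orderOf a2),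
            conjHom C hCnormal (a ^ i * a2 ^ j) w) = 1 := by
          rw [Finset.prod_comm]
          have hinner : ∀ j ∈ Finset.range (orderOf a2), (∏ i ∈ Finset.range (orderOf a),
              conjHom C hCnormal (a ^ i * a2 ^ j) w) = 1 := by
            intro j _
            have e1 : ∀ i : ℕ, conjHom C hCnormal (a ^ i * a2 ^ j) w
                = conjHom C hCnormal (a2 ^ j) (conjHom C hCnormal (a ^ i) w) := by
              intro i
              rw [((show Commute a a2 from hab a ha a2 ha2).pow_pow i j).eq, conjHom_mul]
            rw [Finset.prod_congr rfl (fun i _ => e1 i), ← map_prod, hk3, map_one]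
          rw [Finset.prod_congr rfl hinner, Finset.prod_const, one_pow]
        have hz2n : (⟨b2 ^ orderOf a2, hz2C⟩ : ↥C) ^ orderOf a = 1 := by
          rw [← hT1, hT2]
        have hb2n : (b2 ^ orderOf a2) ^ orderOf a = 1 := by
          have := congrArg (Subtype.val) hz2n
          simpa using this
        have hfin : IsOfFinOrder b2 := by
          refine isOfFinOrder_iff_pow_eq_one.mpr
            ⟨orderOf a2 * orderOf a, Nat.mul_pos hnpos2 hnpos, ?_⟩
          rw [pow_mul, hb2n]
        exact hBtf b2 hb2 hb21 hfin
    -- B centralizes C, hence B = C is normal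
    have hBcent : ∀ b₀ ∈ B, ∀ x ∈ C, b₀ * x * b₀⁻¹ = x := by
      intro b₀ hb₀ x hxC
      obtain ⟨n, hn, hxnB⟩ := hcore x hxC
      have hu : b₀ * x * b₀⁻¹ ∈ C := hCnormal.conj_mem x hxC b₀
      have hun : (b₀ * x * b₀⁻¹) ^ n = x ^ n := by
        rw [conj_pow]
        calc b₀ * x ^ n * b₀⁻¹ = x ^ n * b₀ * b₀⁻¹ := by rw [hbb b₀ hb₀ (x ^ n) hxnB]
          _ = x ^ n := by rw [mul_inv_cancel_right]
      have hdiff : ((b₀ * x * b₀⁻¹) * x⁻¹) ^ n = 1 := by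
        have hc : Commute (b₀ * x * b₀⁻¹) x⁻¹ := hCab _ hu _ (C.inv_mem hxC)
        rw [hc.mul_pow, hun, inv_pow, mul_inv_cancel]
      have h1 : (b₀ * x * b₀⁻¹) * x⁻¹ = 1 :=
        hCtf _ (mul_mem hu (C.inv_mem hxC)) (isOfFinOrder_iff_pow_eq_one.mpr ⟨n, hn, hdiff⟩)
      exact mul_inv_eq_one.mp h1
    have hBC : ∀ b₀ ∈ B, b₀ ∈ C := by
      intro b₀ hb₀
      rw [Subgroup.mem_centralizer_iff]
      intro k hkK
      have h1 := hBcent b₀ hb₀ k (hKC k hkK)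
      have h2 : b₀ * k = k * b₀ := by
        calc b₀ * k = (b₀ * k * b₀⁻¹) * b₀ := by group
          _ = k * b₀ := by rw [h1]
      exact h2.symm
    have hCB : ∀ v ∈ C, v ∈ B := by
      intro v hvC
      by_cases hv1 : v = 1
      · rw [hv1]; exact one_mem B
      obtain ⟨a, b, ha, hb, hb1, hvab, hreli, hnorm, hnpos⟩ := hdata v hvC hv1
      have haC : ∀ x ∈ C, a * x * a⁻¹ = x := by
        intro x hxC
        have h1 := hreli x hxC 1
        simp only [pow_one] at h1
        rw [h1]
        have h2 := hBcent b⁻¹ (B.inv_mem hb) x hxC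
        simpa using h2
      have haCmem : a ∈ C := by
        rw [Subgroup.mem_centralizer_iff]
        intro k hkK
        have h1 := haC k (hKC k hkK)
        have h2 : a * k = k * a := by
          calc a * k = (a * k * a⁻¹) * a := by group
            _ = k * a := by rw [h1]
        exact h2.symm
      have ha1 : a = 1 := hCtf a haCmem (hAper a ha)
      rw [hvab, ha1, one_mul]; exact hb
    have hBnormal : B.Normal := by
      constructor
      intro n hn g
      exact hCB _ (hCnormal.conj_mem n (hBC n hn) g)
    by_cases hA1 : ∀ x ∈ A, x = 1
    · left
      refine ⟨(Subgroup.eq_bot_iff_forall A).mpr hA1, ?_⟩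
      rw [eq_top_iff]
      intro g _
      obtain ⟨a, ha, b, hb, hg⟩ := hprod g
      rw [hg, hA1 a ha, one_mul]; exact hb
    · push_neg at hA1
      obtain ⟨a₀, ha₀, ha₀ne⟩ := hA1
      -- every non-trivial element of A inverts B
      have hinv0 : ∀ a' ∈ A, a' ≠ 1 → ∀ x ∈ B, a'⁻¹ * x * a' = x⁻¹ := by
        intro a' ha' ha'ne
        have hconjB : ∀ x ∈ B, a'⁻¹ * x * a' ∈ B := by
          intro x hx
          have := hBnormal.conj_mem x hx a'⁻¹
          simpa using this
        have hdich : ∀ x ∈ B, x ≠ 1 → a'⁻¹ * x * a' = x ∨ a'⁻¹ * x * a' = x⁻¹ := by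
          intro x hx hx1
          have hxinf : ¬ IsOfFinOrder x := hBtf x hx hx1
          have hax : a'⁻¹ * x * a' ∈ B := hconjB x hx
          have haxne : a'⁻¹ * x * a' ≠ 1 := by
            intro hcon
            apply hx1
            have hxx : x = a' * (a'⁻¹ * x * a') * a'⁻¹ := by group
            rw [hxx, hcon, mul_one, mul_inv_cancel]
          obtain ⟨p, q, hp0, hq0, hpq⟩ := hcomm _ hax x hx haxne hx1
          have hiter : ∀ k : ℕ, ((a' ^ k)⁻¹ * x * a' ^ k) ^ (p ^ k) = x ^ (q ^ k) := by
            intro k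
            induction k with
            | zero => simp
            | succ k ih =>
              have e1 : (a' ^ (k + 1))⁻¹ * x * a' ^ (k + 1)
                  = a'⁻¹ * ((a' ^ k)⁻¹ * x * a' ^ k) * a' := by
                rw [pow_succ]
                simp [mul_assoc, mul_inv_rev]
              calc ((a' ^ (k + 1))⁻¹ * x * a' ^ (k + 1)) ^ (p ^ (k + 1))
                  = (a'⁻¹ * ((a' ^ k)⁻¹ * x * a' ^ k) * a') ^ (p ^ (k + 1)) := by rw [e1]
                _ = a'⁻¹ * (((a' ^ k)⁻¹ * x * a' ^ k) ^ (p ^ (k + 1))) * a' := by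
                    rw [conj_zpow']
                _ = a'⁻¹ * ((((a' ^ k)⁻¹ * x * a' ^ k) ^ (p ^ k)) ^ p) * a' := by
                    rw [← zpow_mul, ← pow_succ]
                _ = a'⁻¹ * ((x ^ (q ^ k)) ^ p) * a' := by rw [ih]
                _ = a'⁻¹ * x ^ (q ^ k * p) * a' := by rw [← zpow_mul]
                _ = (a'⁻¹ * x * a') ^ (q ^ k * p) := by rw [conj_zpow']
                _ = ((a'⁻¹ * x * a') ^ p) ^ (q ^ k) := by rw [← zpow_mul, mul_comm]
                _ = (x ^ q) ^ (q ^ k) := by rw [hpq]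
                _ = x ^ (q ^ (k + 1)) := by rw [← zpow_mul, ← pow_succ']
          have hN := hiter (orderOf a')
          rw [pow_orderOf_eq_one a'] at hN
          simp only [inv_one, one_mul, mul_one] at hN
          have hord1 : orderOf a' ≠ 0 := (hAper a' ha').orderOf_pos.ne'
          have hsame : p ^ orderOf a' = q ^ orderOf a' := by
            have h0 : x ^ (p ^ orderOf a' - q ^ orderOf a') = 1 := by
              rw [zpow_sub, hN, mul_inv_cancel]
            have := zpow_eq_one_imp hxinf h0
            omega
          have habs : p = q ∨ p = -q := by
            rw [← Int.natAbs_eq_natAbs_iff]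
            have h2 : p.natAbs ^ orderOf a' = q.natAbs ^ orderOf a' := by
              have h3 := congrArg Int.natAbs hsame
              simpa [Int.natAbs_pow] using h3
            exact Nat.pow_left_injective hord1 h2
          rcases habs with hcase | hcase
          · left
            rw [hcase] at hpq
            have h4 : ((a'⁻¹ * x * a') * x⁻¹) ^ q = 1 := by
              have hcmul : Commute (a'⁻¹ * x * a') x⁻¹ := by
                have := hbb _ hax x⁻¹ (B.inv_mem hx)
                exact this
              rw [hcmul.mul_zpow, hpq, inv_zpow, mul_inv_cancel]
            have h5 : (a'⁻¹ * x * a') * x⁻¹ = 1 := by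
              by_contra hne
              have hBmem : (a'⁻¹ * x * a') * x⁻¹ ∈ B := mul_mem hax (B.inv_mem hx)
              have := zpow_eq_one_imp (hBtf _ hBmem hne) h4
              rw [hcase] at hp0
              exact hp0 this
            exact mul_inv_eq_one.mp h5
          · right
            rw [hcase] at hpq
            have h4 : ((a'⁻¹ * x * a') * x) ^ (-q) = 1 := by
              have hcmul : Commute (a'⁻¹ * x * a') x := hbb _ hax x hx
              rw [hcmul.mul_zpow, hpq, ← zpow_add, add_neg_cancel, zpow_zero]
            have h5 : (a'⁻¹ * x * a') * x = 1 := by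
              by_contra hne
              have hBmem : (a'⁻¹ * x * a') * x ∈ B := mul_mem hax hx
              have := zpow_eq_one_imp (hBtf _ hBmem hne) h4
              omega
            exact eq_inv_of_mul_eq_one_left h5
        by_cases hfix : ∃ y ∈ B, y ≠ 1 ∧ a'⁻¹ * y * a' = y
        · exfalso
          obtain ⟨y, hy, hy1, hyfix⟩ := hfix
          have hallfix : ∀ x ∈ B, a'⁻¹ * x * a' = x := by
            intro x hx
            by_cases hx1 : x = 1
            · rw [hx1, mul_one, inv_mul_cancel]
            rcases hdich x hx hx1 with h | h
            · exact h
            · exfalso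
              obtain ⟨p, q, hp0, hq0, hpq⟩ := hcomm x hx y hy hx1 hy1
              have hL : a'⁻¹ * x ^ p * a' = x ^ (-p) := by
                rw [← conj_zpow', h, inv_zpow, ← zpow_neg]
              have hR : a'⁻¹ * y ^ q * a' = y ^ q := by
                rw [← conj_zpow', hyfix]
              have h6 : x ^ (-p) = x ^ p := by
                rw [← hL, hpq, hR, ← hpq]
              have h7 : x ^ (p + p) = 1 := by
                rw [zpow_add]
                nth_rewrite 2 [← h6]
                rw [← zpow_add, add_neg_cancel, zpow_zero]
              have := zpow_eq_one_imp (hBtf x hx hx1) h7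
              omega
          have hcentral : ∀ g : G, a' * g = g * a' := by
            intro g
            obtain ⟨α, hα, β, hβ, hg⟩ := hprod g
            have h1 : a' * α = α * a' := hab a' ha' α hα
            have h2 : a' * β = β * a' := by
              calc a' * β = a' * (a'⁻¹ * β * a') := by rw [hallfix β hβ]
                _ = β * a' := by group
            rw [hg]
            calc a' * (α * β) = (a' * α) * β := (mul_assoc _ _ _).symm
              _ = (α * a') * β := by rw [h1]
              _ = α * (a' * β) := mul_assoc _ _ _
              _ = α * (β * a') := by rw [h2]
              _ = (α * β) * a' := (mul_assoc _ _ _).symm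
          have hzn : (Subgroup.zpowers a').Normal := by
            constructor
            intro n hn g
            obtain ⟨m, hm⟩ := Subgroup.mem_zpowers_iff.mp hn
            rw [← hm]
            have hcm : a' ^ m * g = g * a' ^ m :=
              ((show Commute a' g from hcentral g).zpow_left m).eq
            have he : g * a' ^ m * g⁻¹ = a' ^ m := by
              rw [← hcm, mul_inv_cancel_right]
            rw [he]
            exact Subgroup.mem_zpowers_iff.mpr ⟨m, rfl⟩
          have hzper : ∀ x ∈ Subgroup.zpowers a', IsOfFinOrder x := by
            intro x hx
            obtain ⟨m, hm⟩ := Subgroup.mem_zpowers_iff.mp hx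
            rw [← hm]
            exact (hAper a' ha').zpow
          have hz := hrad _ hzn hzper
          have ha'mem : a' ∈ (⊥ : Subgroup G) := hz ▸ Subgroup.mem_zpowers a'
          exact ha'ne (by simpa using ha'mem)
        · push_neg at hfix
          intro x hx
          by_cases hx1 : x = 1
          · rw [hx1, mul_one, inv_mul_cancel, inv_one]
          rcases hdich x hx hx1 with h | h
          · exact absurd h (hfix x hx hx1)
          · exact h
      obtain ⟨x₀, hx₀B, hx₀ne⟩ : ∃ x₀ ∈ B, x₀ ≠ 1 := by
        by_contra hcon
        push_neg at hcon
        exact hBne ((Subgroup.eq_bot_iff_forall B).mpr hcon)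
      have hmul1 : ∀ a1 ∈ A, a1 ≠ 1 → ∀ a2 ∈ A, a2 ≠ 1 → a1 * a2 = 1 := by
        intro a1 h1 h1n a2 h2 h2n
        by_contra hne
        have h12 : a1 * a2 ∈ A := mul_mem h1 h2
        have hinv12 := hinv0 (a1 * a2) h12 hne x₀ hx₀B
        have hid : (a1 * a2)⁻¹ * x₀ * (a1 * a2) = x₀ := by
          have e1 : (a1 * a2)⁻¹ * x₀ * (a1 * a2) = a2⁻¹ * (a1⁻¹ * x₀ * a1) * a2 := by group
          rw [e1, hinv0 a1 h1 h1n x₀ hx₀B]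
          have e2 : a2⁻¹ * x₀⁻¹ * a2 = (a2⁻¹ * x₀ * a2)⁻¹ := by group
          rw [e2, hinv0 a2 h2 h2n x₀ hx₀B, inv_inv]
        rw [hid] at hinv12
        have hsq : x₀ ^ 2 = 1 := by
          calc x₀ ^ 2 = x₀ * x₀ := sq x₀
            _ = x₀ * x₀⁻¹ := by nth_rewrite 2 [hinv12]; rfl
            _ = 1 := mul_inv_cancel x₀
        exact hBtf x₀ hx₀B hx₀ne (isOfFinOrder_iff_pow_eq_one.mpr ⟨2, two_pos, hsq⟩)
      have ha₀sq : a₀ ^ 2 = 1 := by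
        rw [sq]; exact hmul1 a₀ ha₀ ha₀ne a₀ ha₀ ha₀ne
      have ha₀inv : a₀⁻¹ = a₀ := by
        have h2 : a₀ * a₀ = 1 := by rw [← sq]; exact ha₀sq
        calc a₀⁻¹ = a₀⁻¹ * (a₀ * a₀) := by rw [h2, mul_one]
          _ = a₀ := by rw [inv_mul_cancel_left]
      have hAsub : ∀ a' ∈ A, a' = 1 ∨ a' = a₀ := by
        intro a' ha'
        by_cases h1 : a' = 1
        · left; exact h1
        · right
          have hm := hmul1 a₀ ha₀ ha₀ne a' ha' h1
          have ha'eq : a' = a₀⁻¹ := eq_inv_of_mul_eq_one_right hm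
          rw [ha'eq, ha₀inv]
      right
      refine ⟨a₀, ha₀, ha₀sq, ?_, hBnormal, ?_, ?_, ?_⟩
      · apply le_antisymm
        · intro x hx
          rcases hAsub x hx with h | h
          · rw [h]; exact one_mem _
          · rw [h]; exact Subgroup.mem_zpowers a₀
        · exact Subgroup.zpowers_le.mpr ha₀
      · rw [eq_top_iff]
        intro g _
        obtain ⟨a, ha, b, hb, hg⟩ := hprod g
        rw [hg]
        refine mul_mem (Subgroup.mem_sup_right ?_) (Subgroup.mem_sup_left hb)
        rcases hAsub a ha with h | h
        · rw [h]; exact one_mem _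
        · rw [h]; exact Subgroup.mem_zpowers a₀
      · rw [eq_bot_iff]
        intro x hx
        obtain ⟨hxB, hxZ⟩ := hx
        obtain ⟨m, hm⟩ := Subgroup.mem_zpowers_iff.mp hxZ
        have h2 : a₀ ^ (2 : ℤ) = 1 := by
          rw [show (2 : ℤ) = ((2 : ℕ) : ℤ) from rfl, zpow_natCast, ha₀sq]
        have hxcase : x = 1 ∨ x = a₀ := by
          rcases Int.even_or_odd m with ⟨t, ht⟩ | ⟨t, ht⟩
          · left
            rw [← hm, show m = 2 * t from by omega, zpow_mul, h2, one_zpow]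
          · right
            rw [← hm, show m = 2 * t + 1 from by omega, zpow_add, zpow_mul, h2, one_zpow,
              one_mul, zpow_one]
        rcases hxcase with h | h
        · rw [h]; exact Subgroup.one_mem ⊥
        · exfalso
          rw [h] at hxB
          exact hBtf a₀ hxB ha₀ne (hAper a₀ ha₀)
      · intro b hbB
        exact hinv0 a₀ ha₀ ha₀ne b hbB
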